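/- Suppose X is a Borel space, f : X → ℝ, g : X → (0,∞), h : X → ℝ, T : X → X, w : X → (0,∞) are Borel, h is T-invariant (h∘T = h), h(x) ≤ limsup_n R_n(x) for all x ∈ X, and μ is a T-conservative T-w-invariant Borel measure for which f, g, and g·h are μ-integrable. Then ∫ f dμ ≥ ∫ g·h dμ. -/

import Mathlib

open Finset Filter MeasureTheory

noncomputable def cocycle {X : Type*} (T : X → X) (w : X → ℝ) (x : X) (k : ℕ) : ℝ :=
  ∏ j ∈ Finset.range k, w (T^[j] x)

noncomputable def wSum {X : Type*} (T : X → X) (w : X → ℝ) (h : X → ℝ) (n : ℕ) (x : X) : ℝ :=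
  ∑ k ∈ Finset.range n, h (T^[k] x) * cocycle T w x k

noncomputable def ratio {X : Type*} (T : X → X) (w f g : X → ℝ) (n : ℕ) (x : X) : ℝ :=
  wSum T w f n x / wSum T w g n x

def IsWandering {X : Type*} (T : X → X) (W : Set X) : Prop :=
  ∀ x : X, (W ∩ Set.range fun k : ℕ => T^[k] x).Subsingleton

def IsConservative {X : Type*} [MeasurableSpace X] (T : X → X)
    (μ : Measure X) : Prop :=
  ∀ W : Set X, MeasurableSet W → IsWandering T W → μ W = 0

def IsTWInvariant {X : Type*} [MeasurableSpace X] (T : X → X) (w : X → ℝ)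
    (μ : Measure X) : Prop :=
  ∀ B : Set X, MeasurableSet B →
    μ B = ∫⁻ x in T ⁻¹' B, ENNReal.ofReal (w x) ∂μ

section Aux

variable {X : Type*} {T : X → X} {w : X → ℝ}

lemma cocycle_succ' (x : X) (k : ℕ) :
    cocycle T w x (k + 1) = cocycle T w (T x) k * w x := by
  simp [cocycle, Finset.prod_range_succ', Function.iterate_succ_apply]

lemma wSum_zero (φ : X → ℝ) (x : X) : wSum T w φ 0 x = 0 := by simp [wSum]

lemma wSum_succ' (φ : X → ℝ) (n : ℕ) (x : X) :
    wSum T w φ (n + 1) x = φ x + w x * wSum T w φ n (T x) := by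
  unfold wSum
  rw [Finset.sum_range_succ', Finset.mul_sum]
  simp only [cocycle_succ', Function.iterate_succ_apply, Function.iterate_zero_apply]
  rw [add_comm]
  congr 1
  · simp [cocycle]
  · exact Finset.sum_congr rfl fun k _ => by ring

lemma cocycle_pos (hw : ∀ x, 0 < w x) (x : X) (k : ℕ) : 0 < cocycle T w x k :=
  Finset.prod_pos fun _ _ => hw _

lemma wSum_pos (hw : ∀ x, 0 < w x) {g : X → ℝ} (hg : ∀ x, 0 < g x) (n : ℕ) (x : X) :
    0 < wSum T w g (n + 1) x :=
  Finset.sum_pos (fun k _ => mul_pos (hg _) (cocycle_pos hw x k)) (by simp)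

lemma h_iterate {h : X → ℝ} (hhinv : h ∘ T = h) (k : ℕ) (x : X) : h (T^[k] x) = h x := by
  induction k with
  | zero => rfl
  | succ k ih => rw [Function.iterate_succ_apply', ← ih]; exact congrFun hhinv _

lemma wSum_psi {f g h : X → ℝ} (hhinv : h ∘ T = h) (ε : ℝ) (n : ℕ) (x : X) :
    wSum T w (fun y => f y - (h y - ε) * g y) n x
      = wSum T w f n x - (h x - ε) * wSum T w g n x := by
  unfold wSum
  rw [Finset.mul_sum, ← Finset.sum_sub_distrib]
  exact Finset.sum_congr rfl fun k _ => by simp only []; rw [h_iterate hhinv]; ring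

lemma wSum_neg_sub {f g : X → ℝ} (c : ℝ) (n : ℕ) (x : X) :
    wSum T w (fun y => -f y - c * g y) n x
      = -wSum T w f n x - c * wSum T w g n x := by
  unfold wSum
  rw [Finset.mul_sum, ← Finset.sum_neg_distrib, ← Finset.sum_sub_distrib]
  exact Finset.sum_congr rfl fun k _ => by simp only []; ring

variable [MeasurableSpace X]

lemma measurable_cocycle (hT : Measurable T) (hwm : Measurable w) (k : ℕ) :
    Measurable fun x => cocycle T w x k :=
  Finset.measurable_prod _ fun j _ => hwm.comp (hT.iterate j)

lemma measurable_wSum (hT : Measurable T) (hwm : Measurable w) {φ : X → ℝ}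
    (hφ : Measurable φ) (n : ℕ) : Measurable (wSum T w φ n) :=
  Finset.measurable_sum _ fun k _ =>
    ((hφ.comp (hT.iterate k)).mul (measurable_cocycle hT hwm k))

end Aux

section Inv
variable {X : Type*} [MeasurableSpace X] {T : X → X} {w : X → ℝ} {μ : Measure X}

lemma invariance_integral (hT : Measurable T) (hwm : Measurable w) (hw : ∀ x, 0 < w x)
    (hinv : IsTWInvariant T w μ) {u : X → ℝ} (hu : Measurable u) (hui : Integrable u μ) :
    Integrable (fun x => w x * u (T x)) μ ∧ ∫ x, w x * u (T x) ∂μ = ∫ x, u x ∂μ := by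
  set W : X → NNReal := fun x => Real.toNNReal (w x) with hWdef
  have hWm : Measurable W := hwm.real_toNNReal
  have hWw : ∀ x, (W x : ℝ) = w x := fun x => Real.coe_toNNReal _ (hw x).le
  have hmap : μ = Measure.map T (μ.withDensity fun x => (W x : ENNReal)) := by
    ext s hs
    rw [Measure.map_apply hT hs, withDensity_apply _ (hT hs), hinv s hs]
    rfl
  have hpt : (fun x => W x • u (T x)) = fun x => w x * u (T x) := by
    funext x; rw [NNReal.smul_def, hWw]; rfl
  have hint : Integrable (u ∘ T) (μ.withDensity fun x => (W x : ENNReal)) := by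
    rw [hmap] at hui
    exact (integrable_map_measure hu.aestronglyMeasurable hT.aemeasurable).1 hui
  constructor
  · have h2 := (integrable_withDensity_iff_integrable_smul hWm).1 hint
    have h3 : (fun x => W x • (u ∘ T) x) = fun x => w x * u (T x) := hpt
    rwa [h3] at h2
  · conv_rhs => rw [hmap]
    rw [integral_map hT.aemeasurable
        (by rw [← hmap]; exact hu.aestronglyMeasurable),
      integral_withDensity_eq_integral_smul hWm]
    exact integral_congr_ae (Filter.Eventually.of_forall fun x => (congrFun hpt x).symm)

end Inv

/-- Running maximum `max (0, S¹, …, Sᴺ)` of the weighted sums. -/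
noncomputable def runMax {X : Type*} (T : X → X) (w φ : X → ℝ) : ℕ → X → ℝ
  | 0 => fun _ => 0
  | (N+1) => fun x => max (wSum T w φ (N+1) x) (runMax T w φ N x)

section Hopf
variable {X : Type*} [MeasurableSpace X] {T : X → X} {w : X → ℝ} {μ : Measure X}

/-- Hopf-Garsia maximal ergodic lemma for weighted sums. -/
lemma hopf_maximal (hT : Measurable T) (hwm : Measurable w) (hw : ∀ x, 0 < w x)
    (hinv : IsTWInvariant T w μ) {φ : X → ℝ} (hφ : Measurable φ) (hφi : Integrable φ μ) :
    0 ≤ ∫ x in {x | ∃ n, 0 < wSum T w φ (n + 1) x}, φ x ∂μ := by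
  have hterm : ∀ k, Integrable (fun x => φ (T^[k] x) * cocycle T w x k) μ := by
    intro k
    induction k with
    | zero => simpa [cocycle] using hφi
    | succ k ih =>
      have hm : Measurable fun x => φ (T^[k] x) * cocycle T w x k :=
        (hφ.comp (hT.iterate k)).mul (measurable_cocycle hT hwm k)
      have h1 := (invariance_integral hT hwm hw hinv hm ih).1
      have h2 : (fun x => w x * (φ (T^[k] (T x)) * cocycle T w (T x) k))
          = fun x => φ (T^[k+1] x) * cocycle T w x (k+1) := by
        funext x; rw [cocycle_succ', Function.iterate_succ_apply]; ring
      rwa [h2] at h1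
  have hSint : ∀ n, Integrable (wSum T w φ n) μ := fun n =>
    integrable_finset_sum _ fun k _ => hterm k
  have hSmeas : ∀ n, Measurable (wSum T w φ n) := measurable_wSum hT hwm hφ
  set P : ℕ → X → ℝ := runMax T w φ with hPdef
  have hP0 : ∀ x, P 0 x = 0 := fun x => rfl
  have hPsucc : ∀ N x, P (N+1) x = max (wSum T w φ (N+1) x) (P N x) := fun N x => rfl
  have hPnonneg : ∀ N x, 0 ≤ P N x := by
    intro N; induction N with
    | zero => intro x; rw [hP0]
    | succ N ih => intro x; rw [hPsucc]; exact le_trans (ih x) (le_max_right _ _)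
  have hPle : ∀ N n, n ≤ N → ∀ x, wSum T w φ n x ≤ P N x := by
    intro N; induction N with
    | zero =>
      intro n hn x
      interval_cases n
      rw [hP0, wSum_zero]
    | succ N ih =>
      intro n hn x
      rcases Nat.lt_or_ge n (N+1) with hlt | hge
      · exact le_trans (ih n (Nat.lt_succ_iff.1 hlt) x)
          (by rw [hPsucc]; exact le_max_right _ _)
      · have hEq : n = N + 1 := le_antisymm hn hge
        subst hEq; rw [hPsucc]; exact le_max_left _ _
  have hPexists : ∀ N x, ∃ n ≤ N, P N x = wSum T w φ n x := by
    intro N; induction N with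
    | zero => exact fun x => ⟨0, le_refl 0, (wSum_zero φ x).symm⟩
    | succ N ih =>
      intro x
      rcases le_total (wSum T w φ (N+1) x) (P N x) with hc | hc
      · obtain ⟨n, hn, he⟩ := ih x
        exact ⟨n, hn.trans (Nat.le_succ N), by rw [hPsucc, max_eq_right hc]; exact he⟩
      · exact ⟨N+1, le_refl _, by rw [hPsucc, max_eq_left hc]⟩
  have hPmono : ∀ N d x, P N x ≤ P (N + d) x := by
    intro N d x
    induction d with
    | zero => exact le_refl _
    | succ d ih =>
      have hs : P (N + d) x ≤ P (N + d + 1) x := by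
        rw [hPsucc]; exact le_max_right _ _
      exact ih.trans hs
  have hPmeas : ∀ N, Measurable (P N) := by
    intro N; induction N with
    | zero => simpa [hPdef, runMax] using measurable_const
    | succ N ih =>
      have : P (N+1) = fun x => max (wSum T w φ (N+1) x) (P N x) := rfl
      rw [this]; exact (hSmeas (N+1)).max ih
  have hPint : ∀ N, Integrable (P N) μ := by
    intro N; induction N with
    | zero =>
      have : P 0 = fun _ => (0:ℝ) := rfl
      rw [this]; exact integrable_zero _ _ _
    | succ N ih =>
      have hEq : P (N+1) = fun x => max (wSum T w φ (N+1) x) (P N x) := rfl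
      rw [hEq]
      refine Integrable.mono ((hSint (N+1)).abs.add ih.abs)
        ((hSmeas (N+1)).max (hPmeas N)).aestronglyMeasurable
        (Filter.Eventually.of_forall fun x => ?_)
      have h1 : |max (wSum T w φ (N+1) x) (P N x)| ≤ |wSum T w φ (N+1) x| + |P N x| :=
        (abs_max_le_max_abs_abs).trans (max_le (le_add_of_nonneg_right (abs_nonneg _))
          (le_add_of_nonneg_left (abs_nonneg _)))
      calc ‖max (wSum T w φ (N+1) x) (P N x)‖ = |max (wSum T w φ (N+1) x) (P N x)| := rfl
        _ ≤ |wSum T w φ (N+1) x| + |P N x| := h1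
        _ ≤ ‖|wSum T w φ (N+1) x| + |P N x|‖ := le_abs_self _
  set A : ℕ → Set X := fun N => {x | 0 < P N x} with hAdef
  have hA : ∀ N, MeasurableSet (A N) := fun N =>
    measurableSet_lt measurable_const (hPmeas N)
  have key : ∀ N x, P N x ≤ w x * P N (T x) + Set.indicator (A N) φ x := by
    intro N x
    by_cases hx : x ∈ A N
    · obtain ⟨n, hn, he⟩ := hPexists N x
      have hx' : 0 < P N x := hx
      rcases n with _ | m
      · rw [he, wSum_zero] at hx'; exact absurd hx' (lt_irrefl 0)
      · rw [Set.indicator_of_mem hx, he, wSum_succ']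
        have hble : wSum T w φ m (T x) ≤ P N (T x) := hPle N m (by omega) (T x)
        have := mul_le_mul_of_nonneg_left hble (hw x).le
        linarith
    · rw [Set.indicator_of_notMem hx]
      have h0 : P N x = 0 := le_antisymm (not_lt.1 (by simpa [hAdef] using hx)) (hPnonneg N x)
      rw [h0, add_zero]
      exact mul_nonneg (hw x).le (hPnonneg N (T x))
  have hstep : ∀ N, 0 ≤ ∫ x in A N, φ x ∂μ := by
    intro N
    have hWP := invariance_integral hT hwm hw hinv (hPmeas N) (hPint N)
    have hind : Integrable (Set.indicator (A N) φ) μ := hφi.indicator (hA N)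
    have hm := integral_mono (hPint N) (hWP.1.add hind) (key N)
    simp only [Pi.add_apply] at hm
    rw [integral_add hWP.1 hind, hWP.2, integral_indicator (hA N)] at hm
    linarith
  have hU : (⋃ N, A N) = {x | ∃ n, 0 < wSum T w φ (n + 1) x} := by
    ext x
    simp only [Set.mem_iUnion, Set.mem_setOf_eq, hAdef]
    constructor
    · rintro ⟨N, hN⟩
      obtain ⟨n, hn, he⟩ := hPexists N x
      rcases n with _ | m
      · rw [he, wSum_zero] at hN; exact absurd hN (lt_irrefl 0)
      · exact ⟨m, by rw [← he]; exact hN⟩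
    · rintro ⟨n, hn⟩
      exact ⟨n+1, lt_of_lt_of_le hn (hPle (n+1) (n+1) (le_refl _) x)⟩
  have hMono : Monotone A := by
    intro N M hNM x hx
    obtain ⟨d, rfl⟩ := Nat.exists_eq_add_of_le hNM
    exact lt_of_lt_of_le hx (hPmono N d x)
  have htend := tendsto_setIntegral_of_monotone hA hMono
    (by rw [hU]; exact hφi.integrableOn)
  rw [hU] at htend
  exact ge_of_tendsto' htend hstep

end Hopf

theorem integral_ge_of_le_limsup {X : Type*} [MeasurableSpace X]
    (T : X → X) (f g h w : X → ℝ)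
    (hT : Measurable T) (hf : Measurable f) (hgm : Measurable g)
    (hhm : Measurable h) (hwm : Measurable w)
    (hg : ∀ x, 0 < g x) (hw : ∀ x, 0 < w x)
    (hhinv : h ∘ T = h)
    (hle : ∀ x, h x ≤ limsup (fun n : ℕ => ratio T w f g n x) atTop)
    (μ : Measure X) (hcons : IsConservative T μ) (hinv : IsTWInvariant T w μ)
    (hfint : Integrable f μ) (hgint : Integrable g μ)
    (hghint : Integrable (fun x => g x * h x) μ) :
    ∫ x, g x * h x ∂μ ≤ ∫ x, f x ∂μ := by
  have key : ∀ ε : ℝ, 0 < ε →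
      ∫ x, g x * h x ∂μ ≤ ∫ x, f x ∂μ + ε * ∫ x, g x ∂μ := by
    intro ε hε
    set ψ : X → ℝ := fun y => f y - (h y - ε) * g y with hψdef
    have hψm : Measurable ψ := hf.sub ((hhm.sub measurable_const).mul hgm)
    have hψi : Integrable ψ μ := by
      have hEq : ψ = fun y => f y - g y * h y + ε * g y := by
        funext y; simp only [hψdef]; ring
      rw [hEq]; exact (hfint.sub hghint).add (hgint.const_mul ε)
    set AA : Set X := {x | ∃ n, 0 < wSum T w ψ (n+1) x} with hAA
    have hAAm : MeasurableSet AA := by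
      have hEq : AA = ⋃ n, {x | 0 < wSum T w ψ (n+1) x} := by
        ext x; simp [hAA]
      rw [hEq]
      exact MeasurableSet.iUnion fun n =>
        measurableSet_lt measurable_const (measurable_wSum hT hwm hψm (n+1))
    have hhopf := hopf_maximal hT hwm hw hinv hψm hψi
    -- the complement is null
    have hDnull : μ AAᶜ = 0 := by
      have hDsub : ∀ c : ℝ, 0 < c →
          AAᶜ ⊆ {x | ∃ n, 0 < wSum T w (fun y => -f y - c * g y) (n + 1) x} := by
        intro c hc x hx
        have hub : ∀ m : ℕ, ratio T w f g (m+1) x ≤ h x - ε := by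
          intro m
          have h1 : ¬ 0 < wSum T w ψ (m+1) x := fun hcon => hx ⟨m, hcon⟩
          have h3 := wSum_psi (T := T) (w := w) (f := f) (g := g) hhinv ε (m+1) x
          rw [← hψdef] at h3
          have h2 : wSum T w f (m+1) x - (h x - ε) * wSum T w g (m+1) x ≤ 0 := by
            rw [← h3]; exact not_lt.1 h1
          have hgp := wSum_pos (T := T) hw hg m x
          show wSum T w f (m+1) x / wSum T w g (m+1) x ≤ h x - ε
          rw [div_le_iff₀ hgp]; linarith
        have hBot : Tendsto (fun n => ratio T w f g n x) atTop atBot := by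
          by_cases hbdd : BddBelow {a | ∀ᶠ n in atTop, ratio T w f g n x ≤ a}
          · exfalso
            have hmem : (h x - ε) ∈ {a | ∀ᶠ n in atTop, ratio T w f g n x ≤ a} := by
              filter_upwards [eventually_ge_atTop 1] with n hn
              rcases n with _ | m
              · omega
              · exact hub m
            have hcsinf := csInf_le hbdd hmem
            rw [← limsup_eq] at hcsinf
            linarith [hle x]
          · rw [tendsto_atBot]
            intro b
            obtain ⟨a, haS, hab⟩ := not_bddBelow_iff.1 hbdd b
            exact haS.mono fun n hn => hn.trans hab.le
        obtain ⟨n, hn1, hn2⟩ :=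
          ((tendsto_atBot.1 hBot (-(c+1))).and (eventually_ge_atTop 1)).exists
        rcases n with _ | m
        · omega
        · refine ⟨m, ?_⟩
          have hgp := wSum_pos (T := T) hw hg m x
          have hfle : wSum T w f (m+1) x ≤ -(c+1) * wSum T w g (m+1) x := by
            have := (div_le_iff₀ hgp).1 hn1
            linarith
          rw [wSum_neg_sub]
          nlinarith
      have hB : (0:ℝ) ≤ ∫ x, |f x| ∂μ := integral_nonneg fun x => abs_nonneg _
      have hDg0 : ∀ c : ℝ, 0 < c → c * ∫ x in AAᶜ, g x ∂μ ≤ ∫ x, |f x| ∂μ := by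
        intro c hc
        set S : Set X := {x | ∃ n, 0 < wSum T w (fun y => -f y - c * g y) (n + 1) x} with hS
        have hSm : MeasurableSet S := by
          have hEq : S = ⋃ n, {x | 0 < wSum T w (fun y => -f y - c * g y) (n+1) x} := by
            ext x; simp [hS]
          rw [hEq]
          exact MeasurableSet.iUnion fun n => measurableSet_lt measurable_const
            (measurable_wSum hT hwm (hf.neg.sub (hgm.const_mul c)) (n+1))
        have hφcm : Measurable fun y => -f y - c * g y := hf.neg.sub (hgm.const_mul c)
        have hφci : Integrable (fun y => -f y - c * g y) μ :=
          hfint.neg.sub (hgint.const_mul c)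
        have h0 := hopf_maximal hT hwm hw hinv hφcm hφci
        rw [← hS] at h0
        have hi1 : Integrable (fun x => -f x) (μ.restrict S) := hfint.neg.integrableOn
        have hi2 : Integrable (fun x => c * g x) (μ.restrict S) :=
          (hgint.const_mul c).integrableOn
        have hsplit : ∫ x in S, (-f x - c * g x) ∂μ
            = ∫ x in S, (-f x) ∂μ - c * ∫ x in S, g x ∂μ := by
          rw [integral_sub hi1 hi2, integral_const_mul]
        rw [hsplit] at h0
        have hfS : ∫ x in S, (-f x) ∂μ ≤ ∫ x, |f x| ∂μ := by
          have h1 : ∫ x in S, (-f x) ∂μ ≤ ∫ x in S, |f x| ∂μ :=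
            integral_mono_ae hi1 hfint.abs.integrableOn
              (Filter.Eventually.of_forall fun x => neg_le_abs _)
          have h2 : ∫ x in S, |f x| ∂μ ≤ ∫ x, |f x| ∂μ :=
            setIntegral_le_integral hfint.abs
              (Filter.Eventually.of_forall fun x => abs_nonneg _)
          linarith
        have hgmono : ∫ x in AAᶜ, g x ∂μ ≤ ∫ x in S, g x ∂μ :=
          setIntegral_mono_set hgint.integrableOn
            (Filter.Eventually.of_forall fun x => (hg x).le)
            (HasSubset.Subset.eventuallyLE (hDsub c hc))
        have := mul_le_mul_of_nonneg_left hgmono hc.le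
        linarith
      have hDgnonneg : 0 ≤ ∫ x in AAᶜ, g x ∂μ :=
        setIntegral_nonneg hAAm.compl fun x _ => (hg x).le
      have hDgz : ∫ x in AAᶜ, g x ∂μ = 0 := by
        by_contra hne
        have hpos : 0 < ∫ x in AAᶜ, g x ∂μ := lt_of_le_of_ne hDgnonneg (Ne.symm hne)
        set c : ℝ := ((∫ x, |f x| ∂μ) + 1) / ∫ x in AAᶜ, g x ∂μ with hcdef
        have hcpos : 0 < c := div_pos (by linarith) hpos
        have hceq : c * ∫ x in AAᶜ, g x ∂μ = (∫ x, |f x| ∂μ) + 1 :=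
          div_mul_cancel₀ _ hpos.ne'
        have := hDg0 c hcpos
        rw [hceq] at this
        linarith
      have hae := (integral_eq_zero_iff_of_nonneg (fun x => (hg x).le)
        hgint.integrableOn).1 hDgz
      rw [Filter.EventuallyEq, ae_iff] at hae
      have hset : {x | ¬ g x = (0:X → ℝ) x} = Set.univ := by
        ext x; simp [(hg x).ne']
      rw [hset, Measure.restrict_apply_univ] at hae
      exact hae
    have hIψ : 0 ≤ ∫ x, ψ x ∂μ := by
      have hsplit := integral_add_compl hAAm hψi
      have hz : ∫ x in AAᶜ, ψ x ∂μ = 0 := by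
        rw [Measure.restrict_eq_zero.2 hDnull, integral_zero_measure]
      linarith [hhopf, hsplit.symm ▸ (by linarith [hhopf, hz] : (0:ℝ) ≤ ∫ x in AA, ψ x ∂μ + ∫ x in AAᶜ, ψ x ∂μ)]
    have hEq : ∫ x, ψ x ∂μ
        = ∫ x, f x ∂μ - ∫ x, g x * h x ∂μ + ε * ∫ x, g x ∂μ := by
      have hEq2 : ψ = fun y => f y - g y * h y + ε * g y := by
        funext y; simp only [hψdef]; ring
      have hi1 : Integrable (fun y => f y - g y * h y) μ := hfint.sub hghint
      have hi2 : Integrable (fun y => ε * g y) μ := hgint.const_mul ε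
      have e1 : ∫ x, ψ x ∂μ = ∫ x, (f x - g x * h x + ε * g x) ∂μ := by rw [hEq2]
      have e2 : ∫ x, (f x - g x * h x + ε * g x) ∂μ
          = (∫ x, (f x - g x * h x) ∂μ) + ∫ x, ε * g x ∂μ := integral_add hi1 hi2
      have e3 : ∫ x, (f x - g x * h x) ∂μ = ∫ x, f x ∂μ - ∫ x, g x * h x ∂μ :=
        integral_sub hfint hghint
      have e4 : ∫ x, ε * g x ∂μ = ε * ∫ x, g x ∂μ := integral_const_mul ε g
      rw [e1, e2, e3, e4]
    rw [hEq] at hIψ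
    linarith
  have hIg : 0 ≤ ∫ x, g x ∂μ := integral_nonneg fun x => (hg x).le
  by_contra hlt
  push_neg at hlt
  set d : ℝ := (∫ x, g x * h x ∂μ) - ∫ x, f x ∂μ with hd
  have hdpos : 0 < d := by simp only [hd]; linarith
  set ε : ℝ := d / ((∫ x, g x ∂μ) + 1) with hε
  have hεpos : 0 < ε := div_pos hdpos (by linarith)
  have hεeq : ε * ((∫ x, g x ∂μ) + 1) = d := div_mul_cancel₀ _ (by linarith)
  have := key ε hεpos
  nlinarith
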